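/- arXiv:1904.09798 — 2 statements merged into one kernel-verified Lean document; each statement's English description precedes it below -/
import Mathlib

section
/- Let r be a positive even integer and n = r+2. Then the full power set 2^{[n]} is a weakly r-separated collection; in fact, the only pair of subsets of [n] that is (r+2)-interlaced consists of the set of even elements {2,4,…,r+2} and the set of odd elements {1,3,…,r+1}, which have equal cardinality. Moreover, |2^{[n]}| = 2^{r+2} strictly exceeds C(n,0)+C(n,1)+⋯+C(n,r+1) = 2^{r+2} − 1. -/
open Finset

/-- An alternating sequence for the pair of sets `A`, `B`: a strictly increasing
sequence whose odd-position elements lie in one of `A \ B`, `B \ A` and whose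
even-position elements lie in the other. -/
def IsAltSeq (A B : Finset ℕ) {m : ℕ} (f : Fin m → ℕ) : Prop :=
  StrictMono f ∧
    ((∀ j : Fin m, (j : ℕ) % 2 = 0 → f j ∈ A \ B) ∧
        (∀ j : Fin m, (j : ℕ) % 2 = 1 → f j ∈ B \ A) ∨
      (∀ j : Fin m, (j : ℕ) % 2 = 0 → f j ∈ B \ A) ∧
        (∀ j : Fin m, (j : ℕ) % 2 = 1 → f j ∈ A \ B))

/-- `altLen A B` is the maximum length of an alternating sequence for `A`, `B`. -/
noncomputable def altLen (A B : Finset ℕ) : ℕ :=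
  sSup {m : ℕ | ∃ f : Fin m → ℕ, IsAltSeq A B f}

/-- `A` surrounds `B`:  `min (A \ B) < min (B \ A)` and `max (B \ A) < max (A \ B)`. -/
def Surrounds (A B : Finset ℕ) : Prop :=
  (A \ B).min < (B \ A).min ∧ (B \ A).max < (A \ B).max

/-- Weak `r`-separation for an odd `r`. -/
def WeaklySep (r : ℕ) (A B : Finset ℕ) : Prop :=
  altLen A B ≤ r + 2 ∧
    (altLen A B = r + 2 →
      Surrounds A B ∧ A.card ≤ B.card ∨ Surrounds B A ∧ B.card ≤ A.card)

/-- `A` surrounds `B` from the right: `max (B \ A) < max (A \ B)`. -/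
def SurroundsRight (A B : Finset ℕ) : Prop :=
  (B \ A).max < (A \ B).max

/-- Weak `r`-separation for an even `r`. -/
def WeaklySepE (r : ℕ) (A B : Finset ℕ) : Prop :=
  altLen A B ≤ r + 2 ∧
    (altLen A B = r + 2 →
      SurroundsRight A B ∧ A.card ≤ B.card ∨ SurroundsRight B A ∧ B.card ≤ A.card)
lemma exists_altseq_zero (A B : Finset ℕ) : ∃ f : Fin 0 → ℕ, IsAltSeq A B f :=
  ⟨Fin.elim0, fun a => a.elim0, Or.inl ⟨fun j => j.elim0, fun j => j.elim0⟩⟩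

lemma altseq_mem_Icc {n : ℕ} {A B : Finset ℕ} (hA : A ⊆ Finset.Icc 1 n)
    (hB : B ⊆ Finset.Icc 1 n) {m : ℕ} {f : Fin m → ℕ} (hf : IsAltSeq A B f)
    (j : Fin m) : f j ∈ Finset.Icc 1 n := by
  have : f j ∈ A \ B ∨ f j ∈ B \ A := by
    rcases hf.2 with ⟨h0, h1⟩ | ⟨h0, h1⟩ <;>
      rcases Nat.mod_two_eq_zero_or_one (j : ℕ) with hj | hj
    · exact Or.inl (h0 j hj)
    · exact Or.inr (h1 j hj)
    · exact Or.inr (h0 j hj)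
    · exact Or.inl (h1 j hj)
  rcases this with h | h
  · exact hA (Finset.mem_sdiff.mp h).1
  · exact hB (Finset.mem_sdiff.mp h).1

lemma altseq_len_le {n : ℕ} {A B : Finset ℕ} (hA : A ⊆ Finset.Icc 1 n)
    (hB : B ⊆ Finset.Icc 1 n) {m : ℕ} {f : Fin m → ℕ} (hf : IsAltSeq A B f) :
    m ≤ n := by
  have hinj := hf.1.injective
  calc m = (Finset.univ.image f).card := by
        rw [Finset.card_image_of_injective _ hinj, Finset.card_univ, Fintype.card_fin]
    _ ≤ (Finset.Icc 1 n).card := by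
        apply Finset.card_le_card
        intro x hx
        simp only [Finset.mem_image, Finset.mem_univ, true_and] at hx
        obtain ⟨j, rfl⟩ := hx
        exact altseq_mem_Icc hA hB hf j
    _ = n := by rw [Nat.card_Icc]; omega

lemma altLen_le {n : ℕ} {A B : Finset ℕ} (hA : A ⊆ Finset.Icc 1 n)
    (hB : B ⊆ Finset.Icc 1 n) : altLen A B ≤ n := by
  have hne : {m : ℕ | ∃ f : Fin m → ℕ, IsAltSeq A B f}.Nonempty :=
    ⟨0, exists_altseq_zero A B⟩
  refine csSup_le hne ?_
  rintro m ⟨f, hf⟩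
  exact altseq_len_le hA hB hf

lemma strictMono_fin_add {m : ℕ} {f : Fin m → ℕ} (hf : StrictMono f) :
    ∀ d : ℕ, ∀ i j : Fin m, (j : ℕ) = (i : ℕ) + d → f i + d ≤ f j := by
  intro d
  induction d with
  | zero =>
    intro i j h
    have hij : i = j := Fin.ext (by omega)
    rw [hij]
    omega
  | succ d ih =>
    intro i j h
    have hjm := j.isLt
    have hj' : (i : ℕ) + d < m := by omega
    have h1 := ih i ⟨(i : ℕ) + d, hj'⟩ rfl
    have h2 : f ⟨(i : ℕ) + d, hj'⟩ < f j := hf (by simp [Fin.lt_def]; omega)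
    omega

lemma altLen_eq_classify {n : ℕ} (hn2 : n % 2 = 0) (hnpos : 0 < n) {A B : Finset ℕ}
    (hA : A ⊆ Finset.Icc 1 n) (hB : B ⊆ Finset.Icc 1 n) (h : altLen A B = n) :
    (A = (Finset.Icc 1 n).filter (fun x => x % 2 = 0) ∧
      B = (Finset.Icc 1 n).filter (fun x => x % 2 = 1)) ∨
    (A = (Finset.Icc 1 n).filter (fun x => x % 2 = 1) ∧
      B = (Finset.Icc 1 n).filter (fun x => x % 2 = 0)) := by
  have hmem : n ∈ {m : ℕ | ∃ f : Fin m → ℕ, IsAltSeq A B f} := by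
    rw [← h]
    exact Nat.sSup_mem ⟨0, exists_altseq_zero A B⟩
      ⟨n, fun m hm => by obtain ⟨f, hf⟩ := hm; exact altseq_len_le hA hB hf⟩
  obtain ⟨f, hf⟩ := hmem
  -- the sequence must be j ↦ j + 1
  have hval : ∀ j : Fin n, f j = (j : ℕ) + 1 := by
    intro j
    have h0 : (0 : ℕ) < n := hnpos
    have hlow := strictMono_fin_add hf.1 (j : ℕ) ⟨0, h0⟩ j (by simp)
    have hf0 : 1 ≤ f ⟨0, h0⟩ :=
      (Finset.mem_Icc.mp (altseq_mem_Icc hA hB hf ⟨0, h0⟩)).1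
    have hlast : (n - 1 : ℕ) < n := by omega
    have hhigh := strictMono_fin_add hf.1 ((n - 1) - (j : ℕ)) j ⟨n - 1, hlast⟩
      (by simp; omega)
    have hfn : f ⟨n - 1, hlast⟩ ≤ n :=
      (Finset.mem_Icc.mp (altseq_mem_Icc hA hB hf ⟨n - 1, hlast⟩)).2
    have hjn : (j : ℕ) < n := j.isLt
    omega
  -- membership of each element according to parity
  have key : ∀ x : ℕ, 1 ≤ x → x ≤ n →
      ((x % 2 = 1 → x ∈ A \ B) ∧ (x % 2 = 0 → x ∈ B \ A)) ∨
      ((x % 2 = 1 → x ∈ B \ A) ∧ (x % 2 = 0 → x ∈ A \ B)) := by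
    intro x hx1 hxn
    have hxlt : x - 1 < n := by omega
    have hfx : f ⟨x - 1, hxlt⟩ = x := by rw [hval]; simp; omega
    rcases hf.2 with ⟨h0, h1⟩ | ⟨h0, h1⟩
    · left
      constructor
      · intro hpar
        have : (x - 1) % 2 = 0 := by omega
        have := h0 ⟨x - 1, hxlt⟩ this
        rwa [hfx] at this
      · intro hpar
        have : (x - 1) % 2 = 1 := by omega
        have := h1 ⟨x - 1, hxlt⟩ this
        rwa [hfx] at this
    · right
      constructor
      · intro hpar
        have : (x - 1) % 2 = 0 := by omega
        have := h0 ⟨x - 1, hxlt⟩ this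
        rwa [hfx] at this
      · intro hpar
        have : (x - 1) % 2 = 1 := by omega
        have := h1 ⟨x - 1, hxlt⟩ this
        rwa [hfx] at this
  -- the disjunction in key is uniform since it comes from hf.2
  rcases hf.2 with ⟨h0, h1⟩ | ⟨h0, h1⟩
  · -- odd x ∈ A \ B, even x ∈ B \ A
    have hodd : ∀ x : ℕ, 1 ≤ x → x ≤ n → x % 2 = 1 → x ∈ A \ B := by
      intro x hx1 hxn hpar
      have hxlt : x - 1 < n := by omega
      have hfx : f ⟨x - 1, hxlt⟩ = x := by rw [hval]; simp; omega
      have := h0 ⟨x - 1, hxlt⟩ (by simp; omega)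
      rwa [hfx] at this
    have heven : ∀ x : ℕ, 1 ≤ x → x ≤ n → x % 2 = 0 → x ∈ B \ A := by
      intro x hx1 hxn hpar
      have hxlt : x - 1 < n := by omega
      have hfx : f ⟨x - 1, hxlt⟩ = x := by rw [hval]; simp; omega
      have := h1 ⟨x - 1, hxlt⟩ (by simp; omega)
      rwa [hfx] at this
    right
    constructor
    · ext x
      simp only [Finset.mem_filter, Finset.mem_Icc]
      constructor
      · intro hx
        have hxI := Finset.mem_Icc.mp (hA hx)
        refine ⟨hxI, ?_⟩
        rcases Nat.mod_two_eq_zero_or_one x with hp | hp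
        · exact absurd hx (Finset.mem_sdiff.mp (heven x hxI.1 hxI.2 hp)).2.elim
        · exact hp
      · rintro ⟨⟨hx1, hxn⟩, hp⟩
        exact (Finset.mem_sdiff.mp (hodd x hx1 hxn hp)).1
    · ext x
      simp only [Finset.mem_filter, Finset.mem_Icc]
      constructor
      · intro hx
        have hxI := Finset.mem_Icc.mp (hB hx)
        refine ⟨hxI, ?_⟩
        rcases Nat.mod_two_eq_zero_or_one x with hp | hp
        · exact hp
        · exact absurd hx (Finset.mem_sdiff.mp (hodd x hxI.1 hxI.2 hp)).2.elim
      · rintro ⟨⟨hx1, hxn⟩, hp⟩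
        exact (Finset.mem_sdiff.mp (heven x hx1 hxn hp)).1
  · -- odd x ∈ B \ A, even x ∈ A \ B
    have hodd : ∀ x : ℕ, 1 ≤ x → x ≤ n → x % 2 = 1 → x ∈ B \ A := by
      intro x hx1 hxn hpar
      have hxlt : x - 1 < n := by omega
      have hfx : f ⟨x - 1, hxlt⟩ = x := by rw [hval]; simp; omega
      have := h0 ⟨x - 1, hxlt⟩ (by simp; omega)
      rwa [hfx] at this
    have heven : ∀ x : ℕ, 1 ≤ x → x ≤ n → x % 2 = 0 → x ∈ A \ B := by
      intro x hx1 hxn hpar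
      have hxlt : x - 1 < n := by omega
      have hfx : f ⟨x - 1, hxlt⟩ = x := by rw [hval]; simp; omega
      have := h1 ⟨x - 1, hxlt⟩ (by simp; omega)
      rwa [hfx] at this
    left
    constructor
    · ext x
      simp only [Finset.mem_filter, Finset.mem_Icc]
      constructor
      · intro hx
        have hxI := Finset.mem_Icc.mp (hA hx)
        refine ⟨hxI, ?_⟩
        rcases Nat.mod_two_eq_zero_or_one x with hp | hp
        · exact hp
        · exact absurd hx (Finset.mem_sdiff.mp (hodd x hxI.1 hxI.2 hp)).2.elim
      · rintro ⟨⟨hx1, hxn⟩, hp⟩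
        exact (Finset.mem_sdiff.mp (heven x hx1 hxn hp)).1
    · ext x
      simp only [Finset.mem_filter, Finset.mem_Icc]
      constructor
      · intro hx
        have hxI := Finset.mem_Icc.mp (hB hx)
        refine ⟨hxI, ?_⟩
        rcases Nat.mod_two_eq_zero_or_one x with hp | hp
        · exact absurd hx (Finset.mem_sdiff.mp (heven x hxI.1 hxI.2 hp)).2.elim
        · exact hp
      · rintro ⟨⟨hx1, hxn⟩, hp⟩
        exact (Finset.mem_sdiff.mp (hodd x hx1 hxn hp)).1
lemma card_filter_parity_eq {n : ℕ} (hn2 : n % 2 = 0) :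
    ((Finset.Icc 1 n).filter (fun x => x % 2 = 0)).card =
      ((Finset.Icc 1 n).filter (fun x => x % 2 = 1)).card := by
  have himg : (Finset.Icc 1 n).filter (fun x => x % 2 = 0) =
      ((Finset.Icc 1 n).filter (fun x => x % 2 = 1)).image (· + 1) := by
    ext x
    simp only [Finset.mem_filter, Finset.mem_Icc, Finset.mem_image]
    constructor
    · rintro ⟨⟨hx1, hxn⟩, hp⟩
      exact ⟨x - 1, ⟨⟨by omega, by omega⟩, by omega⟩, by omega⟩
    · rintro ⟨y, ⟨⟨hy1, hyn⟩, hp⟩, rfl⟩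
      exact ⟨⟨by omega, by omega⟩, by omega⟩
  rw [himg, Finset.card_image_of_injective _ (add_left_injective 1)]

lemma filter_sdiff_parity (n : ℕ) (a b : ℕ) (hab : a ≠ b) :
    ((Finset.Icc 1 n).filter (fun x => x % 2 = a)) \
      ((Finset.Icc 1 n).filter (fun x => x % 2 = b)) =
      (Finset.Icc 1 n).filter (fun x => x % 2 = a) := by
  ext x
  simp only [Finset.mem_sdiff, Finset.mem_filter, Finset.mem_Icc]
  constructor
  · rintro ⟨h, _⟩; exact h
  · rintro ⟨hI, hp⟩
    exact ⟨⟨hI, hp⟩, by rintro ⟨_, hp'⟩; omega⟩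

lemma max_odd_lt_max_even {n : ℕ} (hn2 : n % 2 = 0) (hnpos : 0 < n) :
    ((Finset.Icc 1 n).filter (fun x => x % 2 = 1)).max <
      ((Finset.Icc 1 n).filter (fun x => x % 2 = 0)).max := by
  have h1 : ((Finset.Icc 1 n).filter (fun x => x % 2 = 1)).max ≤ ((n - 1 : ℕ) : WithBot ℕ) := by
    apply Finset.max_le
    intro a ha
    rw [Finset.mem_filter, Finset.mem_Icc] at ha
    have han : a ≤ n - 1 := by omega
    exact WithBot.coe_le_coe.mpr han
  have h2 : ((n : ℕ) : WithBot ℕ) ≤ ((Finset.Icc 1 n).filter (fun x => x % 2 = 0)).max :=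
    Finset.le_max (Finset.mem_filter.mpr ⟨Finset.mem_Icc.mpr ⟨hnpos, le_refl n⟩, hn2⟩)
  exact lt_of_le_of_lt h1 (lt_of_lt_of_le (WithBot.coe_lt_coe.mpr (by omega : n - 1 < n)) h2)

/-- (Remark 2) for even r and n = r + 2, the full power set
2^[n] is weakly r-separated; the only (r+2)-interlaced pair is the set of
even elements together with the set of odd elements of [n], which have equal
cardinality; and 2^{r+2} strictly exceeds C(n,0) + ⋯ + C(n,r+1) = 2^{r+2} - 1. -/
theorem even_full_powerset (r n : ℕ) (hr : Even r) (hrpos : 0 < r)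
    (hn : n = r + 2) :
    (∀ A ⊆ Finset.Icc 1 n, ∀ B ⊆ Finset.Icc 1 n, WeaklySepE r A B) ∧
    (∀ A ⊆ Finset.Icc 1 n, ∀ B ⊆ Finset.Icc 1 n, altLen A B = r + 2 →
      (A = (Finset.Icc 1 n).filter (fun x => x % 2 = 0) ∧
        B = (Finset.Icc 1 n).filter (fun x => x % 2 = 1)) ∨
      (A = (Finset.Icc 1 n).filter (fun x => x % 2 = 1) ∧
        B = (Finset.Icc 1 n).filter (fun x => x % 2 = 0))) ∧
    ((Finset.Icc 1 n).filter (fun x => x % 2 = 0)).card =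
      ((Finset.Icc 1 n).filter (fun x => x % 2 = 1)).card ∧
    (Finset.Icc 1 n).powerset.card = 2 ^ (r + 2) ∧
    (∑ i ∈ Finset.range (r + 2), Nat.choose n i = 2 ^ (r + 2) - 1) ∧
    ∑ i ∈ Finset.range (r + 2), Nat.choose n i < (Finset.Icc 1 n).powerset.card := by
  subst hn
  obtain ⟨k, hk⟩ := hr
  have hn2 : (r + 2) % 2 = 0 := by omega
  have hnpos : 0 < r + 2 := by omega
  have hcard := card_filter_parity_eq hn2
  have hclassify : ∀ A ⊆ Finset.Icc 1 (r + 2), ∀ B ⊆ Finset.Icc 1 (r + 2),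
      altLen A B = r + 2 →
      (A = (Finset.Icc 1 (r + 2)).filter (fun x => x % 2 = 0) ∧
        B = (Finset.Icc 1 (r + 2)).filter (fun x => x % 2 = 1)) ∨
      (A = (Finset.Icc 1 (r + 2)).filter (fun x => x % 2 = 1) ∧
        B = (Finset.Icc 1 (r + 2)).filter (fun x => x % 2 = 0)) :=
    fun A hA B hB h => altLen_eq_classify hn2 hnpos hA hB h
  refine ⟨?_, hclassify, hcard, ?_, ?_, ?_⟩
  · intro A hA B hB
    refine ⟨altLen_le hA hB, ?_⟩
    intro h
    rcases hclassify A hA B hB h with ⟨hAe, hBo⟩ | ⟨hAo, hBe⟩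
    · -- A is evens, B is odds : A surrounds B from the right
      left
      constructor
      · unfold SurroundsRight
        rw [hAe, hBo, filter_sdiff_parity _ _ _ (by omega),
          filter_sdiff_parity _ _ _ (by omega)]
        exact max_odd_lt_max_even hn2 hnpos
      · rw [hAe, hBo]; exact le_of_eq hcard
    · right
      constructor
      · unfold SurroundsRight
        rw [hAo, hBe, filter_sdiff_parity _ _ _ (by omega),
          filter_sdiff_parity _ _ _ (by omega)]
        exact max_odd_lt_max_even hn2 hnpos
      · rw [hAo, hBe]; exact le_of_eq hcard
  · rw [Finset.card_powerset, Nat.card_Icc]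
    norm_num
  · have hs := Nat.sum_range_choose (r + 2)
    rw [Finset.sum_range_succ, Nat.choose_self] at hs
    omega
  · rw [Finset.card_powerset, Nat.card_Icc,
      show r + 2 + 1 - 1 = r + 2 from by omega]
    have hs := Nat.sum_range_choose (r + 2)
    rw [Finset.sum_range_succ, Nat.choose_self] at hs
    have : 0 < 2 ^ (r + 2) := Nat.pow_pos (by omega)
    omega
end

section
/- Let r be a positive odd integer, r' = (r+1)/2, and let P = {p_1,…,p_{r'}}, Q = {q_0,q_1,…,q_{r'}} ⊆ [n] with q_0 < p_1 < q_1 < p_2 < ⋯ < p_{r'} < q_{r'}, and X ⊆ [n]∖(P∪Q). Then: (a) X∪P and X∪Q are (r+2)-interlaced, X∪Q surrounds X∪P, and |X∪Q| = |X∪P| + 1; in particular X∪P and X∪Q are not weakly r-separated; (b) for any two distinct sets S, S' ∈ {P, Q} ∪ N(P,Q) with {S, S'} ≠ {P, Q}, the sets X∪S and X∪S' are weakly r-separated. Thus {X∪P, X∪Q} is the unique pair of not weakly r-separated sets in the collection {X∪S : S ∈ {P,Q} ∪ N(P,Q)}. -/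
open Finset

lemma isAltSeq_zero (A B : Finset ℕ) : IsAltSeq A B (fun x : Fin 0 => x.elim0) := by
  refine ⟨fun a => a.elim0, Or.inl ⟨fun j => j.elim0, fun j => j.elim0⟩⟩

lemma altSet_nonempty (A B : Finset ℕ) :
    {m : ℕ | ∃ f : Fin m → ℕ, IsAltSeq A B f}.Nonempty :=
  ⟨0, _, isAltSeq_zero A B⟩

lemma altSeq_mem {A B : Finset ℕ} {m : ℕ} {f : Fin m → ℕ} (hf : IsAltSeq A B f) (j : Fin m) :
    f j ∈ (A \ B) ∪ (B \ A) := by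
  rcases Nat.mod_two_eq_zero_or_one (j : ℕ) with h | h <;>
    rcases hf.2 with ⟨h0, h1⟩ | ⟨h0, h1⟩
  · exact mem_union_left _ (h0 j h)
  · exact mem_union_right _ (h0 j h)
  · exact mem_union_right _ (h1 j h)
  · exact mem_union_left _ (h1 j h)

lemma altSeq_le {A B : Finset ℕ} {m : ℕ} {f : Fin m → ℕ} (hf : IsAltSeq A B f) :
    m ≤ ((A \ B) ∪ (B \ A)).card := by
  have := Finset.card_le_card_of_injOn (s := (Finset.univ : Finset (Fin m)))
    (t := (A \ B) ∪ (B \ A)) f (fun j _ => altSeq_mem hf j) hf.1.injective.injOn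
  simpa using this

lemma bddAbove_alt (A B : Finset ℕ) : BddAbove {m : ℕ | ∃ f : Fin m → ℕ, IsAltSeq A B f} :=
  ⟨((A \ B) ∪ (B \ A)).card, fun _ hm => altSeq_le hm.choose_spec⟩

lemma altLen_mem (A B : Finset ℕ) : ∃ f : Fin (altLen A B) → ℕ, IsAltSeq A B f :=
  Nat.sSup_mem (altSet_nonempty A B) (bddAbove_alt A B)

lemma altLen_ge {A B : Finset ℕ} {m : ℕ} (f : Fin m → ℕ) (hf : IsAltSeq A B f) :
    m ≤ altLen A B :=
  le_csSup (bddAbove_alt A B) ⟨f, hf⟩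

lemma altLen_le_card (A B : Finset ℕ) : altLen A B ≤ ((A \ B) ∪ (B \ A)).card :=
  csSup_le (altSet_nonempty A B) (fun _ hm => altSeq_le hm.choose_spec)

lemma union_sdiff_union (X S S' T : Finset ℕ) (hS : S ⊆ T) (hX : ∀ x ∈ X, x ∉ T) :
    (X ∪ S) \ (X ∪ S') = S \ S' := by
  ext a
  simp only [mem_sdiff, mem_union, not_or]
  constructor
  · rintro ⟨h | h, hx, hs'⟩
    · exact absurd h hx
    · exact ⟨h, hs'⟩
  · rintro ⟨ha, hs'⟩
    exact ⟨Or.inr ha, fun hx => hX a hx (hS ha), hs'⟩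

section gseq
variable {r' : ℕ} (p : Fin r' → ℕ) (q : Fin (r' + 1) → ℕ)

def gSeq (j : Fin (2 * r' + 1)) : ℕ :=
  if h : (j : ℕ) % 2 = 0 then q ⟨(j : ℕ) / 2, by omega⟩ else p ⟨(j : ℕ) / 2, by omega⟩

lemma gSeq_even (j : Fin (2 * r' + 1)) (h : (j : ℕ) % 2 = 0) :
    gSeq p q j = q ⟨(j : ℕ) / 2, by omega⟩ := dif_pos h

lemma gSeq_odd (j : Fin (2 * r' + 1)) (h : (j : ℕ) % 2 = 1) :
    gSeq p q j = p ⟨(j : ℕ) / 2, by omega⟩ := dif_neg (by omega)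

lemma gSeq_q (i : Fin (r' + 1)) (h : 2 * (i : ℕ) < 2 * r' + 1) :
    gSeq p q ⟨2 * (i : ℕ), h⟩ = q i :=
  (gSeq_even p q ⟨2 * (i : ℕ), h⟩ (by show 2 * (i : ℕ) % 2 = 0; omega)).trans
    (congrArg q (Fin.ext (by show 2 * (i : ℕ) / 2 = (i : ℕ); omega)))

lemma gSeq_p (i : Fin r') (h : 2 * (i : ℕ) + 1 < 2 * r' + 1) :
    gSeq p q ⟨2 * (i : ℕ) + 1, h⟩ = p i :=
  (gSeq_odd p q ⟨2 * (i : ℕ) + 1, h⟩ (by show (2 * (i : ℕ) + 1) % 2 = 1; omega)).trans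
    (congrArg p (Fin.ext (by show (2 * (i : ℕ) + 1) / 2 = (i : ℕ); omega)))

variable (hchain : ∀ i : Fin r', q i.castSucc < p i ∧ p i < q i.succ)
include hchain

lemma gSeq_strictMono : StrictMono (gSeq p q) := by
  rw [Fin.strictMono_iff_lt_succ]
  intro i
  have hlt : (i : ℕ) < 2 * r' := i.isLt
  have hsv : (i.succ : ℕ) = (i : ℕ) + 1 := rfl
  have hcv : (i.castSucc : ℕ) = (i : ℕ) := rfl
  rcases Nat.mod_two_eq_zero_or_one (i : ℕ) with h | h
  · have hh : (i : ℕ) / 2 < r' := by omega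
    have e1 : gSeq p q i.castSucc = q ((⟨(i : ℕ) / 2, hh⟩ : Fin r').castSucc) :=
      (gSeq_even p q i.castSucc (by omega)).trans
        (congrArg q (Fin.ext (by show (i.castSucc : ℕ) / 2 = (i : ℕ) / 2; omega)))
    have e2 : gSeq p q i.succ = p ⟨(i : ℕ) / 2, hh⟩ :=
      (gSeq_odd p q i.succ (by omega)).trans
        (congrArg p (Fin.ext (by show (i.succ : ℕ) / 2 = (i : ℕ) / 2; omega)))
    rw [e1, e2]
    exact (hchain _).1
  · have hh : (i : ℕ) / 2 < r' := by omega
    have e1 : gSeq p q i.castSucc = p ⟨(i : ℕ) / 2, hh⟩ :=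
      (gSeq_odd p q i.castSucc (by omega)).trans
        (congrArg p (Fin.ext (by show (i.castSucc : ℕ) / 2 = (i : ℕ) / 2; omega)))
    have e2 : gSeq p q i.succ = q ((⟨(i : ℕ) / 2, hh⟩ : Fin r').succ) :=
      (gSeq_even p q i.succ (by omega)).trans
        (congrArg q (Fin.ext (by show (i.succ : ℕ) / 2 = (i : ℕ) / 2 + 1; omega)))
    rw [e1, e2]
    exact (hchain _).2

omit hchain in
lemma gSeq_image :
    Finset.image (gSeq p q) Finset.univ =
      Finset.image p Finset.univ ∪ Finset.image q Finset.univ := by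
  apply Finset.Subset.antisymm
  · intro a ha
    rcases Finset.mem_image.1 ha with ⟨j, _, rfl⟩
    rcases Nat.mod_two_eq_zero_or_one (j : ℕ) with h | h
    · rw [gSeq_even p q j h]
      exact mem_union_right _ (Finset.mem_image.2 ⟨_, Finset.mem_univ _, rfl⟩)
    · rw [gSeq_odd p q j h]
      exact mem_union_left _ (Finset.mem_image.2 ⟨_, Finset.mem_univ _, rfl⟩)
  · intro a ha
    rcases Finset.mem_union.1 ha with h | h
    · rcases Finset.mem_image.1 h with ⟨i, _, rfl⟩
      exact Finset.mem_image.2 ⟨⟨2 * (i : ℕ) + 1, by omega⟩, Finset.mem_univ _, gSeq_p p q i (by omega)⟩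
    · rcases Finset.mem_image.1 h with ⟨i, _, rfl⟩
      exact Finset.mem_image.2 ⟨⟨2 * (i : ℕ), by omega⟩, Finset.mem_univ _, gSeq_q p q i (by omega)⟩

end gseq

/-- (a) X ∪ P and X ∪ Q are (r+2)-interlaced, X ∪ Q surrounds
X ∪ P, |X ∪ Q| = |X ∪ P| + 1, and X ∪ P, X ∪ Q are not weakly r-separated;
(b) any two distinct members S, S' of {P, Q} ∪ N(P,Q) other than the pair
{P, Q} give weakly r-separated sets X ∪ S and X ∪ S'.  (Here
{P, Q} ∪ N(P,Q) = {S ⊆ P ∪ Q : r' ≤ |S| ≤ r' + 1} with r' = (r+1)/2.) -/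
theorem neighbors_unique_bad_pair (r n : ℕ) (hr : Odd r)
    (p : Fin ((r + 1) / 2) → ℕ) (q : Fin ((r + 1) / 2 + 1) → ℕ)
    (hp : ∀ i, p i ∈ Finset.Icc 1 n) (hq : ∀ i, q i ∈ Finset.Icc 1 n)
    (hchain : ∀ i : Fin ((r + 1) / 2), q i.castSucc < p i ∧ p i < q i.succ)
    (P Q : Finset ℕ)
    (hP : P = Finset.image p Finset.univ) (hQ : Q = Finset.image q Finset.univ)
    (X : Finset ℕ) (hX : X ⊆ Finset.Icc 1 n \ (P ∪ Q)) :
    altLen (X ∪ P) (X ∪ Q) = r + 2 ∧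
    Surrounds (X ∪ Q) (X ∪ P) ∧
    (X ∪ Q).card = (X ∪ P).card + 1 ∧
    ¬ WeaklySep r (X ∪ P) (X ∪ Q) ∧
    (∀ S S' : Finset ℕ,
      S ⊆ P ∪ Q → (r + 1) / 2 ≤ S.card → S.card ≤ (r + 1) / 2 + 1 →
      S' ⊆ P ∪ Q → (r + 1) / 2 ≤ S'.card → S'.card ≤ (r + 1) / 2 + 1 →
      S ≠ S' → ¬ (S = P ∧ S' = Q) → ¬ (S = Q ∧ S' = P) →
      WeaklySep r (X ∪ S) (X ∪ S')) := by
  have hodd : r % 2 = 1 := Nat.odd_iff.mp hr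
  have hE : r + 2 = 2 * ((r + 1) / 2) + 1 := by omega
  have hXn : ∀ x ∈ X, x ∉ P ∪ Q := fun x hx => (Finset.mem_sdiff.1 (hX hx)).2
  have hmono := gSeq_strictMono p q hchain
  have hPQim : P ∪ Q = Finset.image (gSeq p q) Finset.univ := by
    rw [hP, hQ]; exact (gSeq_image p q).symm
  have hPQcard : (P ∪ Q).card = r + 2 := by
    rw [hPQim, Finset.card_image_of_injective _ hmono.injective, card_univ, Fintype.card_fin]
    omega
  -- disjointness of P and Q
  have hdisjPQ : ∀ a, a ∈ P → a ∈ Q → False := by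
    intro a haP haQ
    rw [hP] at haP; rw [hQ] at haQ
    rcases Finset.mem_image.1 haP with ⟨i, -, rfl⟩
    rcases Finset.mem_image.1 haQ with ⟨j, -, hj⟩
    have e1 := gSeq_p p q i (by omega)
    have e2 := gSeq_q p q j (by omega)
    have h3 := hmono.injective (e1.trans (hj.symm.trans e2.symm))
    have h4 := congrArg Fin.val h3
    simp only [] at h4
    omega
  have dPQ : (X ∪ P) \ (X ∪ Q) = P := by
    rw [union_sdiff_union X P Q (P ∪ Q) Finset.subset_union_left hXn]
    exact Finset.sdiff_eq_self_iff_disjoint.2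
      (Finset.disjoint_left.2 fun _ ha hb => hdisjPQ _ ha hb)
  have dQP : (X ∪ Q) \ (X ∪ P) = Q := by
    rw [union_sdiff_union X Q P (P ∪ Q) Finset.subset_union_right hXn]
    exact Finset.sdiff_eq_self_iff_disjoint.2
      (Finset.disjoint_left.2 fun _ ha hb => hdisjPQ _ hb ha)
  -- generic upper bound
  have genub : ∀ S S' : Finset ℕ, S ⊆ P ∪ Q → S' ⊆ P ∪ Q →
      altLen (X ∪ S) (X ∪ S') ≤ r + 2 := by
    intro S S' hS hS'
    refine le_trans (altLen_le_card _ _) ?_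
    rw [union_sdiff_union X S S' (P ∪ Q) hS hXn,
      union_sdiff_union X S' S (P ∪ Q) hS' hXn, ← hPQcard]
    exact Finset.card_le_card (Finset.union_subset
      (Finset.sdiff_subset.trans hS) (Finset.sdiff_subset.trans hS'))
  -- the full alternating sequence
  have hseq : IsAltSeq (X ∪ P) (X ∪ Q) (fun j : Fin (r + 2) => gSeq p q (Fin.cast hE j)) := by
    refine ⟨hmono.comp (fun a b hab => hab), Or.inr ⟨?_, ?_⟩⟩
    · intro j hj
      show gSeq p q (Fin.cast hE j) ∈ (X ∪ Q) \ (X ∪ P)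
      rw [dQP, gSeq_even p q (Fin.cast hE j) hj, hQ]
      exact Finset.mem_image_of_mem q (Finset.mem_univ _)
    · intro j hj
      show gSeq p q (Fin.cast hE j) ∈ (X ∪ P) \ (X ∪ Q)
      rw [dPQ, gSeq_odd p q (Fin.cast hE j) hj, hP]
      exact Finset.mem_image_of_mem p (Finset.mem_univ _)
  have haltPQ : altLen (X ∪ P) (X ∪ Q) = r + 2 :=
    le_antisymm (genub P Q Finset.subset_union_left Finset.subset_union_right)
      (altLen_ge _ hseq)
  -- nonemptiness
  have Pne : P.Nonempty := ⟨p ⟨0, by omega⟩, by rw [hP]; exact Finset.mem_image_of_mem _ (Finset.mem_univ _)⟩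
  have hq0P : ∀ a ∈ P, q ⟨0, by omega⟩ < a := by
    intro a ha
    rw [hP] at ha
    rcases Finset.mem_image.1 ha with ⟨i, -, rfl⟩
    rw [← gSeq_q p q ⟨0, by omega⟩ (by show 2 * 0 < 2 * ((r+1)/2) + 1; omega),
      ← gSeq_p p q i (by omega)]
    exact hmono (show (2 * 0 : ℕ) < 2 * (i : ℕ) + 1 by omega)
  have hqlP : ∀ a ∈ P, a < q ⟨(r + 1) / 2, by omega⟩ := by
    intro a ha
    rw [hP] at ha
    rcases Finset.mem_image.1 ha with ⟨i, -, rfl⟩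
    rw [← gSeq_q p q ⟨(r + 1) / 2, by omega⟩ (by show 2 * ((r+1)/2) < 2 * ((r+1)/2) + 1; omega),
      ← gSeq_p p q i (by omega)]
    exact hmono (show (2 * (i : ℕ) + 1 : ℕ) < 2 * ((r + 1) / 2) by omega)
  have hminlt : Q.min < P.min := by
    have h1 : Q.min ≤ (q ⟨0, by omega⟩ : ℕ) :=
      Finset.min_le (by rw [hQ]; exact Finset.mem_image_of_mem _ (Finset.mem_univ _))
    have h2 : (q ⟨0, by omega⟩ : ℕ) < P.min' Pne := hq0P _ (Finset.min'_mem P Pne)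
    calc Q.min ≤ ((q ⟨0, by omega⟩ : ℕ) : WithTop ℕ) := h1
      _ < ((P.min' Pne : ℕ) : WithTop ℕ) := WithTop.coe_lt_coe.2 h2
      _ = P.min := Finset.coe_min' Pne
  have hmaxlt : P.max < Q.max := by
    have h2 : (P.max' Pne : ℕ) < q ⟨(r + 1) / 2, by omega⟩ := hqlP _ (Finset.max'_mem P Pne)
    calc P.max = ((P.max' Pne : ℕ) : WithBot ℕ) := (Finset.coe_max' Pne).symm
      _ < ((q ⟨(r + 1) / 2, by omega⟩ : ℕ) : WithBot ℕ) := WithBot.coe_lt_coe.2 h2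
      _ ≤ Q.max := Finset.le_max (by rw [hQ]; exact Finset.mem_image_of_mem _ (Finset.mem_univ _))
  have hSur : Surrounds (X ∪ Q) (X ∪ P) := by
    refine ⟨?_, ?_⟩
    · rw [dQP, dPQ]; exact hminlt
    · rw [dQP, dPQ]; exact hmaxlt
  -- cardinalities
  have pinj : Function.Injective p := by
    intro i j hij
    have h3 := hmono.injective ((gSeq_p p q i (by omega)).trans
      (hij.trans (gSeq_p p q j (by omega)).symm))
    have h4 := congrArg Fin.val h3
    simp only [] at h4
    exact Fin.ext (by omega)
  have qinj : Function.Injective q := by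
    intro i j hij
    have h3 := hmono.injective ((gSeq_q p q i (by omega)).trans
      (hij.trans (gSeq_q p q j (by omega)).symm))
    have h4 := congrArg Fin.val h3
    simp only [] at h4
    exact Fin.ext (by omega)
  have cardP : P.card = (r + 1) / 2 := by
    rw [hP, Finset.card_image_of_injective _ pinj, card_univ, Fintype.card_fin]
  have cardQ : Q.card = (r + 1) / 2 + 1 := by
    rw [hQ, Finset.card_image_of_injective _ qinj, card_univ, Fintype.card_fin]
  have hdXP : Disjoint X P :=
    Finset.disjoint_left.2 fun _ hx hp' => hXn _ hx (Finset.mem_union_left _ hp')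
  have hdXQ : Disjoint X Q :=
    Finset.disjoint_left.2 fun _ hx hq' => hXn _ hx (Finset.mem_union_right _ hq')
  have hcards : (X ∪ Q).card = (X ∪ P).card + 1 := by
    rw [Finset.card_union_of_disjoint hdXP, Finset.card_union_of_disjoint hdXQ, cardP, cardQ]
    omega
  refine ⟨haltPQ, hSur, hcards, ?_, ?_⟩
  · rintro ⟨-, h2⟩
    rcases h2 haltPQ with ⟨hs, -⟩ | ⟨-, hc⟩
    · obtain ⟨h1', -⟩ := hs
      rw [dPQ, dQP] at h1'
      exact lt_asymm h1' hminlt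
    · omega
  · intro S S' hSsub hc1 hc2 hS'sub hc1' hc2' hne hPQ' hQP'
    refine ⟨genub S S' hSsub hS'sub, ?_⟩
    intro heq
    exfalso
    obtain ⟨f, hf⟩ := altLen_mem (X ∪ S) (X ∪ S')
    have hE2 : altLen (X ∪ S) (X ∪ S') = 2 * ((r + 1) / 2) + 1 := by omega
    have hcard' : (P ∪ Q).card = altLen (X ∪ S) (X ∪ S') := by omega
    have d1 := union_sdiff_union X S S' (P ∪ Q) hSsub hXn
    have d2 := union_sdiff_union X S' S (P ∪ Q) hS'sub hXn
    have hfmem : ∀ j, f j ∈ P ∪ Q := by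
      intro j
      have h5 := altSeq_mem hf j
      rw [d1, d2] at h5
      exact Finset.union_subset (Finset.sdiff_subset.trans hSsub)
        (Finset.sdiff_subset.trans hS'sub) h5
    have hfe : f = ⇑((P ∪ Q).orderEmbOfFin hcard') :=
      Finset.orderEmbOfFin_unique hcard' hfmem hf.1
    have hge : (fun j => gSeq p q (Fin.cast hE2 j)) = ⇑((P ∪ Q).orderEmbOfFin hcard') :=
      Finset.orderEmbOfFin_unique hcard'
        (fun j => by rw [hPQim]; exact Finset.mem_image_of_mem _ (Finset.mem_univ _))
        (hmono.comp (fun a b hab => hab))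
    have hfg : ∀ j, f j = gSeq p q (Fin.cast hE2 j) := by
      intro j; rw [hfe, ← hge]
    have hqpos : ∀ i : Fin ((r + 1) / 2 + 1),
        ∃ j : Fin (altLen (X ∪ S) (X ∪ S')), (j : ℕ) % 2 = 0 ∧ f j = q i := by
      intro i
      refine ⟨⟨2 * (i : ℕ), by omega⟩, by show 2 * (i : ℕ) % 2 = 0; omega, ?_⟩
      rw [hfg]
      exact gSeq_q p q i (by omega)
    have hppos : ∀ i : Fin ((r + 1) / 2),
        ∃ j : Fin (altLen (X ∪ S) (X ∪ S')), (j : ℕ) % 2 = 1 ∧ f j = p i := by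
      intro i
      refine ⟨⟨2 * (i : ℕ) + 1, by omega⟩, by show (2 * (i : ℕ) + 1) % 2 = 1; omega, ?_⟩
      rw [hfg]
      exact gSeq_p p q i (by omega)
    rcases hf.2 with ⟨h0, h1⟩ | ⟨h0, h1⟩
    · have hQS : ∀ a ∈ Q, a ∈ S \ S' := by
        intro a ha
        rw [hQ] at ha
        rcases Finset.mem_image.1 ha with ⟨i, -, rfl⟩
        obtain ⟨j, hj0, hjq⟩ := hqpos i
        have h6 := h0 j hj0
        rw [hjq, d1] at h6
        exact h6
      have hPS' : ∀ a ∈ P, a ∈ S' \ S := by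
        intro a ha
        rw [hP] at ha
        rcases Finset.mem_image.1 ha with ⟨i, -, rfl⟩
        obtain ⟨j, hj1, hjp⟩ := hppos i
        have h6 := h1 j hj1
        rw [hjp, d2] at h6
        exact h6
      have hSQ : S = Q := by
        apply Finset.Subset.antisymm
        · intro a haS
          rcases Finset.mem_union.1 (hSsub haS) with hp' | hq'
          · exact absurd haS (Finset.mem_sdiff.1 (hPS' a hp')).2
          · exact hq'
        · intro a haQ; exact (Finset.mem_sdiff.1 (hQS a haQ)).1
      have hS'P : S' = P := by
        apply Finset.Subset.antisymm
        · intro a haS'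
          rcases Finset.mem_union.1 (hS'sub haS') with hp' | hq'
          · exact hp'
          · exact absurd haS' (Finset.mem_sdiff.1 (hQS a hq')).2
        · intro a haP; exact (Finset.mem_sdiff.1 (hPS' a haP)).1
      exact hQP' ⟨hSQ, hS'P⟩
    · have hQS' : ∀ a ∈ Q, a ∈ S' \ S := by
        intro a ha
        rw [hQ] at ha
        rcases Finset.mem_image.1 ha with ⟨i, -, rfl⟩
        obtain ⟨j, hj0, hjq⟩ := hqpos i
        have h6 := h0 j hj0
        rw [hjq, d2] at h6
        exact h6
      have hPS : ∀ a ∈ P, a ∈ S \ S' := by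
        intro a ha
        rw [hP] at ha
        rcases Finset.mem_image.1 ha with ⟨i, -, rfl⟩
        obtain ⟨j, hj1, hjp⟩ := hppos i
        have h6 := h1 j hj1
        rw [hjp, d1] at h6
        exact h6
      have hSP : S = P := by
        apply Finset.Subset.antisymm
        · intro a haS
          rcases Finset.mem_union.1 (hSsub haS) with hp' | hq'
          · exact hp'
          · exact absurd haS (Finset.mem_sdiff.1 (hQS' a hq')).2
        · intro a haP; exact (Finset.mem_sdiff.1 (hPS a haP)).1
      have hS'Q : S' = Q := by
        apply Finset.Subset.antisymm
        · intro a haS'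
          rcases Finset.mem_union.1 (hS'sub haS') with hp' | hq'
          · exact absurd haS' (Finset.mem_sdiff.1 (hPS a hp')).2
          · exact hq'
        · intro a haQ; exact (Finset.mem_sdiff.1 (hQS' a haQ)).1
      exact hPQ' ⟨hSP, hS'Q⟩
end
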